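/- Let μ be a probability measure on Y, A ⊆ Y measurable with μ(A) > 0, and 𝒫₁, 𝒫₂, 𝒫₃ finite measurable partitions of Y. For 0 < ε < 1, the relative ε-covering numbers satisfy COV_{μ, 2ε, 𝒫₁∨𝒫₂ | 𝒫₃}(A) ≤ COV_{μ, ε, 𝒫₁ | 𝒫₃}(A) · COV_{μ, ε, 𝒫₂ | 𝒫₃}(A). -/
import Mathlib


open MeasureTheory

/-- `P` is a finite measurable partition of `Y`. -/
def IsPartition {Y : Type*} [MeasurableSpace Y] (P : Finset (Set Y)) : Prop :=
  (∀ s ∈ P, MeasurableSet s) ∧ (⋃ s ∈ P, s) = Set.univ ∧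
    ∀ s ∈ P, ∀ t ∈ P, s ≠ t → Disjoint s t

/-- The ε-covering number `COV_{μ,ε,P}(A)`: the least cardinality of a subfamily
`G ⊆ P` whose union covers at least a `(1−ε)`-fraction of the measure of `A`. -/
noncomputable def covNum {Y : Type*} [MeasurableSpace Y] (μ : Measure Y) (ε : ℝ)
    (P : Finset (Set Y)) (A : Set Y) : ℕ :=
  sInf {m | ∃ G ⊆ P, G.card = m ∧
    μ ((⋃ s ∈ G, s) ∩ A) ≥ (1 - ENNReal.ofReal ε) * μ A}

/-- The relative ε-covering number `COV_{μ,ε,P|Q}(A)`: the minimum over subfamilies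
`Q' ⊆ Q` covering a `(1−ε)`-fraction of `A` of `max_{q ∈ Q'} COV_{μ,ε,P}(A ∩ q)`. -/
noncomputable def relCovNum {Y : Type*} [MeasurableSpace Y] (μ : Measure Y) (ε : ℝ)
    (P Q : Finset (Set Y)) (A : Set Y) : ℕ :=
  sInf {m | ∃ Q' ⊆ Q, μ ((⋃ s ∈ Q', s) ∩ A) ≥ (1 - ENNReal.ofReal ε) * μ A ∧
    ∀ q ∈ Q', covNum μ ε P (A ∩ q) ≤ m}

/-- The join (common refinement) of two finite partitions. -/
noncomputable def joinP {Y : Type*} (P Q : Finset (Set Y)) : Finset (Set Y) :=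
  @Finset.image _ _ (Classical.decEq _) (fun pq => pq.1 ∩ pq.2) (P ×ˢ Q)

/-- Key arithmetic: two `(1-ε)`-covers intersect to a `(1-2ε)`-cover. -/
lemma cover_arith {Y : Type*} [MeasurableSpace Y] (μ : Measure Y) [IsProbabilityMeasure μ]
    {B U₁ U₂ : Set Y} (hU₁ : MeasurableSet U₁) (hU₂ : MeasurableSet U₂)
    {ε : ℝ} (hε1 : ε ≤ 1)
    (h₁ : μ (U₁ ∩ B) ≥ (1 - ENNReal.ofReal ε) * μ B)
    (h₂ : μ (U₂ ∩ B) ≥ (1 - ENNReal.ofReal ε) * μ B) :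
    μ ((U₁ ∩ U₂) ∩ B) ≥ (1 - ENNReal.ofReal (2 * ε)) * μ B := by
  set e := ENNReal.ofReal ε with he
  have he1 : e ≤ 1 := ENNReal.ofReal_le_one.mpr hε1
  have ha : μ B ≠ ⊤ := measure_ne_top μ B
  have key : ∀ U : Set Y, MeasurableSet U → μ (U ∩ B) ≥ (1 - e) * μ B →
      μ (B \ U) ≤ e * μ B := by
    intro U hU h
    have hsum : μ (B \ U) + μ (B ∩ U) = μ B := by
      rw [add_comm]; exact measure_inter_add_diff B hU
    have heq : μ (B \ U) = μ B - μ (B ∩ U) :=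
      ENNReal.eq_sub_of_add_eq (measure_ne_top μ _) hsum
    have hsplit : (1 - e) * μ B + e * μ B = μ B := by
      rw [← add_mul, tsub_add_cancel_of_le he1, one_mul]
    calc μ (B \ U) = μ B - μ (B ∩ U) := heq
      _ ≤ μ B - (1 - e) * μ B := by
          apply tsub_le_tsub_left
          rw [Set.inter_comm]; exact h
      _ ≤ e * μ B := by
          apply tsub_le_iff_right.mpr
          rw [add_comm, hsplit]
  have hd1 : μ (B \ U₁) ≤ e * μ B := key _ hU₁ h₁
  have hd2 : μ (B \ U₂) ≤ e * μ B := key _ hU₂ h₂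
  have hdiff : μ (B \ (U₁ ∩ U₂)) ≤ ENNReal.ofReal (2 * ε) * μ B := by
    have : B \ (U₁ ∩ U₂) = (B \ U₁) ∪ (B \ U₂) := by
      ext x; simp [Set.mem_diff]; tauto
    calc μ (B \ (U₁ ∩ U₂)) ≤ μ (B \ U₁) + μ (B \ U₂) := by
          rw [this]; exact measure_union_le _ _
      _ ≤ e * μ B + e * μ B := add_le_add hd1 hd2
      _ = ENNReal.ofReal (2 * ε) * μ B := by
          rw [← two_mul, ← mul_assoc]
          congr 1
          rw [ENNReal.ofReal_mul (by norm_num : (0:ℝ) ≤ 2), ENNReal.ofReal_ofNat]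
  have hsum : μ (B ∩ (U₁ ∩ U₂)) + μ (B \ (U₁ ∩ U₂)) = μ B :=
    measure_inter_add_diff B (hU₁.inter hU₂)
  have heq : μ (B ∩ (U₁ ∩ U₂)) = μ B - μ (B \ (U₁ ∩ U₂)) :=
    ENNReal.eq_sub_of_add_eq (measure_ne_top μ _) hsum
  rw [Set.inter_comm, heq]
  calc (1 - ENNReal.ofReal (2 * ε)) * μ B
      ≤ μ B - ENNReal.ofReal (2 * ε) * μ B := by
        rw [ENNReal.sub_mul (fun _ _ => ha), one_mul]
    _ ≤ μ B - μ (B \ (U₁ ∩ U₂)) := tsub_le_tsub_left hdiff _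

lemma covNum_nonempty {Y : Type*} [MeasurableSpace Y] (μ : Measure Y) (ε : ℝ)
    {P : Finset (Set Y)} (hP : IsPartition P) (A : Set Y) :
    ∃ G ⊆ P, G.card = covNum μ ε P A ∧
      μ ((⋃ s ∈ G, s) ∩ A) ≥ (1 - ENNReal.ofReal ε) * μ A := by
  have hne : {m | ∃ G ⊆ P, G.card = m ∧
      μ ((⋃ s ∈ G, s) ∩ A) ≥ (1 - ENNReal.ofReal ε) * μ A}.Nonempty := by
    refine ⟨P.card, P, subset_rfl, rfl, ?_⟩
    rw [hP.2.1, Set.univ_inter]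
    calc (1 - ENNReal.ofReal ε) * μ A ≤ 1 * μ A :=
          mul_le_mul_left tsub_le_self _
      _ = μ A := one_mul _
  exact Nat.sInf_mem hne

lemma relCovNum_nonempty {Y : Type*} [MeasurableSpace Y] (μ : Measure Y) (ε : ℝ)
    (P : Finset (Set Y)) {Q : Finset (Set Y)} (hQ : IsPartition Q) (A : Set Y) :
    ∃ Q' ⊆ Q, μ ((⋃ s ∈ Q', s) ∩ A) ≥ (1 - ENNReal.ofReal ε) * μ A ∧
      ∀ q ∈ Q', covNum μ ε P (A ∩ q) ≤ relCovNum μ ε P Q A := by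
  have hne : {m | ∃ Q' ⊆ Q, μ ((⋃ s ∈ Q', s) ∩ A) ≥ (1 - ENNReal.ofReal ε) * μ A ∧
      ∀ q ∈ Q', covNum μ ε P (A ∩ q) ≤ m}.Nonempty := by
    refine ⟨Q.sup (fun q => covNum μ ε P (A ∩ q)), Q, subset_rfl, ?_, ?_⟩
    · rw [hQ.2.1, Set.univ_inter]
      calc (1 - ENNReal.ofReal ε) * μ A ≤ 1 * μ A :=
            mul_le_mul_left tsub_le_self _
        _ = μ A := one_mul _
    · intro q hq; exact Finset.le_sup (f := fun q => covNum μ ε P (A ∩ q)) hq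
  exact Nat.sInf_mem hne

theorem stmt3 {Y : Type*} [MeasurableSpace Y] (μ : Measure Y) [IsProbabilityMeasure μ]
    (A : Set Y) (hA : MeasurableSet A) (hApos : 0 < μ A)
    (P₁ P₂ P₃ : Finset (Set Y))
    (hP₁ : IsPartition P₁) (hP₂ : IsPartition P₂) (hP₃ : IsPartition P₃)
    (ε : ℝ) (hε : 0 < ε) (hε1 : ε < 1) :
    relCovNum μ (2 * ε) (joinP P₁ P₂) P₃ A
      ≤ relCovNum μ ε P₁ P₃ A * relCovNum μ ε P₂ P₃ A := by
  classical
  obtain ⟨Q₁, hQ₁sub, hQ₁cov, hQ₁bd⟩ := relCovNum_nonempty μ ε P₁ hP₃ A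
  obtain ⟨Q₂, hQ₂sub, hQ₂cov, hQ₂bd⟩ := relCovNum_nonempty μ ε P₂ hP₃ A
  set n₁ := relCovNum μ ε P₁ P₃ A
  set n₂ := relCovNum μ ε P₂ P₃ A
  -- The intersection Q₁ ∩ Q₂ works.
  have hmeasU : ∀ G : Finset (Set Y), G ⊆ P₃ → MeasurableSet (⋃ s ∈ G, s) := by
    intro G hG
    exact MeasurableSet.biUnion G.countable_toSet (fun s hs => hP₃.1 s (hG hs))
  have hUsub : (⋃ s ∈ Q₁, s) ∩ (⋃ s ∈ Q₂, s) ⊆ ⋃ s ∈ Q₁ ∩ Q₂, s := by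
    rintro x ⟨hx₁, hx₂⟩
    simp only [Set.mem_iUnion, exists_prop] at hx₁ hx₂ ⊢
    obtain ⟨q₁, hq₁, hxq₁⟩ := hx₁
    obtain ⟨q₂, hq₂, hxq₂⟩ := hx₂
    have hq : q₁ = q₂ := by
      by_contra hne
      exact (hP₃.2.2 q₁ (hQ₁sub hq₁) q₂ (hQ₂sub hq₂) hne).ne_of_mem hxq₁ hxq₂ rfl
    exact ⟨q₁, Finset.mem_inter.mpr ⟨hq₁, hq ▸ hq₂⟩, hxq₁⟩
  have hcov : μ ((⋃ s ∈ Q₁ ∩ Q₂, s) ∩ A) ≥ (1 - ENNReal.ofReal (2 * ε)) * μ A := by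
    calc (1 - ENNReal.ofReal (2 * ε)) * μ A
        ≤ μ (((⋃ s ∈ Q₁, s) ∩ (⋃ s ∈ Q₂, s)) ∩ A) :=
          cover_arith μ (hmeasU _ hQ₁sub) (hmeasU _ hQ₂sub) hε1.le hQ₁cov hQ₂cov
      _ ≤ μ ((⋃ s ∈ Q₁ ∩ Q₂, s) ∩ A) :=
          measure_mono (Set.inter_subset_inter_left _ hUsub)
  rw [relCovNum]
  apply Nat.sInf_le
  refine ⟨Q₁ ∩ Q₂, (Finset.inter_subset_left).trans hQ₁sub, hcov, ?_⟩
  intro q hq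
  -- Now bound covNum for the join partition on A ∩ q.
  obtain ⟨hq₁, hq₂⟩ := Finset.mem_inter.mp hq
  obtain ⟨G₁, hG₁sub, hG₁card, hG₁cov⟩ := covNum_nonempty μ ε hP₁ (A ∩ q)
  obtain ⟨G₂, hG₂sub, hG₂card, hG₂cov⟩ := covNum_nonempty μ ε hP₂ (A ∩ q)
  set G : Finset (Set Y) :=
    @Finset.image _ _ (Classical.decEq _) (fun pq => pq.1 ∩ pq.2) (G₁ ×ˢ G₂) with hG
  have hGsub : G ⊆ joinP P₁ P₂ := by
    rw [hG, joinP]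
    exact Finset.image_subset_image (Finset.product_subset_product hG₁sub hG₂sub)
  have hGU : (⋃ s ∈ G, s) = (⋃ s ∈ G₁, s) ∩ (⋃ s ∈ G₂, s) := by
    ext x
    simp only [hG, Finset.mem_image, Finset.mem_product, Set.mem_iUnion, Set.mem_inter_iff,
      exists_prop]
    constructor
    · rintro ⟨s, ⟨⟨p, r⟩, ⟨hp, hr⟩, rfl⟩, hxp, hxr⟩
      exact ⟨⟨p, hp, hxp⟩, ⟨r, hr, hxr⟩⟩
    · rintro ⟨⟨p, hp, hxp⟩, ⟨r, hr, hxr⟩⟩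
      exact ⟨p ∩ r, ⟨⟨p, r⟩, ⟨hp, hr⟩, rfl⟩, hxp, hxr⟩
  have hmeasG : ∀ (P : Finset (Set Y)), IsPartition P → ∀ G' : Finset (Set Y), G' ⊆ P →
      MeasurableSet (⋃ s ∈ G', s) := by
    intro P hP G' hG'
    exact MeasurableSet.biUnion G'.countable_toSet (fun s hs => hP.1 s (hG' hs))
  have hGcov : μ ((⋃ s ∈ G, s) ∩ (A ∩ q)) ≥ (1 - ENNReal.ofReal (2 * ε)) * μ (A ∩ q) := by
    rw [hGU]
    exact cover_arith μ (hmeasG P₁ hP₁ G₁ hG₁sub) (hmeasG P₂ hP₂ G₂ hG₂sub) hε1.le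
      hG₁cov hG₂cov
  have hle : covNum μ (2 * ε) (joinP P₁ P₂) (A ∩ q) ≤ G.card := by
    rw [covNum]; exact Nat.sInf_le ⟨G, hGsub, rfl, hGcov⟩
  calc covNum μ (2 * ε) (joinP P₁ P₂) (A ∩ q) ≤ G.card := hle
    _ ≤ (G₁ ×ˢ G₂).card := Finset.card_image_le
    _ = G₁.card * G₂.card := Finset.card_product _ _
    _ ≤ n₁ * n₂ := by
        rw [hG₁card, hG₂card]
        exact Nat.mul_le_mul (hQ₁bd q hq₁) (hQ₂bd q hq₂)
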